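/- Let M and N be positive definite Hermitian (n+1)×(n+1) matrices. Then tr(M⁻¹N) ≤ ((n+1)/n)·(tr(N⁻¹M))ⁿ · det(N)/det(M). -/

import Mathlib

open Matrix ComplexOrder Finset


lemma amgm {ι : Type*} (s : Finset ι) (hs : 0 < s.card) (z : ι → ℝ)
    (hz : ∀ i ∈ s, 0 ≤ z i) :
    ∏ i ∈ s, z i ≤ ((∑ i ∈ s, z i) / s.card) ^ (s.card : ℕ) := by
  have h := Real.geom_mean_le_arith_mean s (fun _ => 1) z (fun _ _ => zero_le_one)
    (by simp [hs]) hz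
  simp only [Real.rpow_one, Finset.sum_const, nsmul_eq_mul, mul_one, one_mul] at h
  have hb : (0:ℝ) ≤ (∏ i ∈ s, z i) ^ ((s.card : ℝ))⁻¹ :=
    Real.rpow_nonneg (Finset.prod_nonneg hz) _
  have := pow_le_pow_left₀ hb h s.card
  rwa [← Real.rpow_natCast ((∏ i ∈ s, z i) ^ ((s.card:ℝ))⁻¹) s.card,
    ← Real.rpow_mul (Finset.prod_nonneg hz), inv_mul_cancel₀ (by positivity),
    Real.rpow_one] at this

lemma key (n : ℕ) (hn : 0 < n) (μ : Fin (n+1) → ℝ) (hμ : ∀ i, 0 < μ i) :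
    ∑ i, μ i ≤ ((n + 1 : ℝ) / n) * (∑ i, (μ i)⁻¹) ^ n * ∏ i, μ i := by
  set S : ℝ := ∑ i, (μ i)⁻¹ with hS
  set P : ℝ := ∏ i, μ i with hP
  have hP0 : 0 < P := Finset.prod_pos (fun i _ => hμ i)
  have hS0 : 0 ≤ S := Finset.sum_nonneg (fun i _ => (inv_nonneg.2 (hμ i).le))
  have hstep : ∀ i : Fin (n+1), μ i ≤ P * (S / n) ^ n := by
    intro i
    have hcard : (Finset.univ.erase i).card = n := by
      rw [Finset.card_erase_of_mem (Finset.mem_univ i)]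
      simp
    have h1 : ∏ j ∈ Finset.univ.erase i, (μ j)⁻¹ ≤
        ((∑ j ∈ Finset.univ.erase i, (μ j)⁻¹) / n) ^ n := by
      have := amgm (Finset.univ.erase i) (by omega : 0 < (Finset.univ.erase i).card)
        (fun j => (μ j)⁻¹) (fun j _ => (inv_nonneg.2 (hμ j).le))
      rwa [hcard] at this
    have h2 : ∑ j ∈ Finset.univ.erase i, (μ j)⁻¹ ≤ S :=
      Finset.sum_le_sum_of_subset_of_nonneg (Finset.subset_univ _)
        (fun j _ _ => inv_nonneg.2 (hμ j).le)
    have h3 : ((∑ j ∈ Finset.univ.erase i, (μ j)⁻¹) / n) ^ n ≤ (S / n) ^ n := by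
      have hn' : (0:ℝ) < n := by exact_mod_cast hn
      apply pow_le_pow_left₀
      · exact div_nonneg (Finset.sum_nonneg (fun j _ => inv_nonneg.2 (hμ j).le)) hn'.le
      · gcongr
    have hdecomp : μ i * ∏ j ∈ Finset.univ.erase i, μ j = P := by
      rw [hP, ← Finset.prod_erase_mul Finset.univ μ (Finset.mem_univ i)]
      ring
    have hinv : ∏ j ∈ Finset.univ.erase i, (μ j)⁻¹ =
        (∏ j ∈ Finset.univ.erase i, μ j)⁻¹ := by
      rw [← Finset.prod_inv_distrib]
    have : μ i = P * ∏ j ∈ Finset.univ.erase i, (μ j)⁻¹ := by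
      rw [hinv, ← hdecomp]
      rw [mul_assoc, mul_inv_cancel₀ (Finset.prod_pos (fun j _ => hμ j)).ne', mul_one]
    rw [this]
    exact mul_le_mul_of_nonneg_left (h1.trans h3) hP0.le
  calc ∑ i, μ i ≤ ∑ _i : Fin (n+1), P * (S / n) ^ n :=
        Finset.sum_le_sum (fun i _ => hstep i)
    _ = (n+1 : ℝ) * P * (S / n) ^ n := by
        simp [Finset.sum_const, Finset.card_univ]; ring
    _ = ((n+1 : ℝ) / n ^ n) * S ^ n * P := by
        rw [div_pow]; field_simp
    _ ≤ ((n + 1 : ℝ) / n) * S ^ n * P := by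
        apply mul_le_mul_of_nonneg_right _ hP0.le
        apply mul_le_mul_of_nonneg_right _ (pow_nonneg hS0 n)
        apply div_le_div_of_nonneg_left (by positivity) (by exact_mod_cast hn)
        exact_mod_cast Nat.le_self_pow hn.ne' n
open Matrix ComplexOrder Finset

variable {m : Type*} [Fintype m] [DecidableEq m]

lemma trace_eq_sum_eig {B : Matrix m m ℂ} (hB : B.IsHermitian) :
    B.trace = ∑ i, (hB.eigenvalues i : ℂ) := by
  conv_lhs => rw [hB.spectral_theorem]
  rw [Unitary.conjStarAlgAut_apply, Matrix.trace_mul_comm, ← Matrix.mul_assoc,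
    (Matrix.mem_unitaryGroup_iff').mp (hB.eigenvectorUnitary).2, Matrix.one_mul,
    Matrix.trace_diagonal]
  rfl

lemma inv_posdef_eq {B : Matrix m m ℂ} (hB : B.PosDef) :
    B⁻¹ = (hB.1.eigenvectorUnitary : Matrix m m ℂ) *
      Matrix.diagonal ((↑) ∘ fun i => (hB.1.eigenvalues i)⁻¹) *
      (star (hB.1.eigenvectorUnitary : Matrix m m ℂ)) := by
  apply Matrix.inv_eq_right_inv
  nth_rewrite 1 [hB.1.spectral_theorem]
  set U : Matrix m m ℂ := (hB.1.eigenvectorUnitary : Matrix m m ℂ)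
  have hU : star U * U = 1 := (Matrix.mem_unitaryGroup_iff').mp (hB.1.eigenvectorUnitary).2
  have hU' : U * star U = 1 := (Matrix.mem_unitaryGroup_iff).mp (hB.1.eigenvectorUnitary).2
  calc U * Matrix.diagonal ((↑) ∘ hB.1.eigenvalues) * star U *
        (U * Matrix.diagonal ((↑) ∘ fun i => (hB.1.eigenvalues i)⁻¹) * star U)
      = U * (Matrix.diagonal ((↑) ∘ hB.1.eigenvalues) * ((star U * U) *
          Matrix.diagonal ((↑) ∘ fun i => (hB.1.eigenvalues i)⁻¹))) * star U := by
        simp only [Matrix.mul_assoc]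
    _ = U * star U := by
        rw [hU, Matrix.one_mul, Matrix.diagonal_mul_diagonal]
        have hf : (fun i => ((↑) ∘ hB.1.eigenvalues : m → ℂ) i *
            ((↑) ∘ fun i => (hB.1.eigenvalues i)⁻¹ : m → ℂ) i) = fun _ => (1 : ℂ) := by
          funext i
          simp only [Function.comp_apply, Complex.ofReal_inv]
          exact mul_inv_cancel₀ (by exact_mod_cast (hB.eigenvalues_pos i).ne')
        rw [hf, Matrix.diagonal_one, Matrix.mul_one]
    _ = 1 := hU'

lemma inv_trace_eq_sum_inv_eig {B : Matrix m m ℂ} (hB : B.PosDef) :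
    B⁻¹.trace = ∑ i, ((hB.1.eigenvalues i)⁻¹ : ℂ) := by
  rw [inv_posdef_eq hB, Matrix.trace_mul_comm, ← Matrix.mul_assoc,
    (Matrix.mem_unitaryGroup_iff').mp (hB.1.eigenvectorUnitary).2, Matrix.one_mul,
    Matrix.trace_diagonal]
  simp

lemma posdef_conj {A : Matrix m m ℂ} (hA : A.PosDef) {B : Matrix m m ℂ}
    (hB : IsUnit B.det) : (Bᴴ * A * B).PosDef := by
  refine Matrix.posDef_iff_dotProduct_mulVec.2 ⟨Matrix.isHermitian_conjTranspose_mul_mul B hA.1, fun x hx => ?_⟩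
  have hBx : B *ᵥ x ≠ 0 := by
    intro h
    have := Matrix.mulVec_injective_iff_isUnit.2 ((Matrix.isUnit_iff_isUnit_det B).2 hB)
      (by rw [h, Matrix.mulVec_zero] : B *ᵥ x = B *ᵥ 0)
    exact hx this
  simpa only [star_mulVec, Matrix.dotProduct_mulVec, Matrix.vecMul_vecMul]
    using hA.dotProduct_mulVec_pos hBx
open Matrix ComplexOrder Finset
/-- For positive definite Hermitian `(n+1)×(n+1)` matrices `M` and `N` (with `n ≥ 1`),
`tr(M⁻¹N) ≤ ((n+1)/n)·(tr(N⁻¹M))ⁿ · det N / det M`. -/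
theorem trace_det_inequality (n : ℕ) (hn : 0 < n)
    (M N : Matrix (Fin (n + 1)) (Fin (n + 1)) ℂ) (hM : M.PosDef) (hN : N.PosDef) :
    (M⁻¹ * N).trace.re ≤
      ((n + 1 : ℝ) / n) * ((N⁻¹ * M).trace.re) ^ n * (N.det.re / M.det.re) := by
  have hMdet : IsUnit M.det := isUnit_iff_ne_zero.2 hM.det_pos.ne'
  have hNdet : IsUnit N.det := isUnit_iff_ne_zero.2 hN.det_pos.ne'
  set A := (open MatrixOrder in CFC.sqrt M) with hAdef
  have hAps : A.PosSemidef := (open MatrixOrder in Matrix.nonneg_iff_posSemidef.mp (CFC.sqrt_nonneg M))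
  have hAH : A.IsHermitian := hAps.1
  have hAA : A * A = M := (open MatrixOrder in CFC.sqrt_mul_sqrt_self M (Matrix.nonneg_iff_posSemidef.mpr hM.posSemidef))
  have hAdet : IsUnit A.det := by
    have h : A.det * A.det = M.det := by rw [← Matrix.det_mul, hAA]
    exact isUnit_of_mul_isUnit_left (h ▸ hMdet)
  have hAiH : A⁻¹.IsHermitian := hAH.inv
  set B := A⁻¹ * N * A⁻¹ with hBdef
  have hB : B.PosDef := by
    have h := posdef_conj hN (B := A⁻¹) (A.isUnit_nonsing_inv_det hAdet)
    rwa [hAiH.eq] at h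
  set μ := hB.1.eigenvalues with hμdef
  have hμ : ∀ i, 0 < μ i := hB.eigenvalues_pos
  -- trace identities
  have h1 : (M⁻¹ * N).trace = B.trace := by
    rw [← hAA, Matrix.mul_inv_rev, Matrix.mul_assoc, Matrix.trace_mul_comm, hBdef]
  have hBinv : B⁻¹ = A * (N⁻¹ * A) := by
    rw [hBdef, Matrix.mul_inv_rev, Matrix.mul_inv_rev,
      Matrix.nonsing_inv_nonsing_inv A hAdet]
  have h2 : (N⁻¹ * M).trace = B⁻¹.trace := by
    rw [hBinv, ← hAA, ← Matrix.mul_assoc, Matrix.trace_mul_comm]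
  have h3 : B.det = N.det / M.det := by
    have hA2 : A.det * A.det = M.det := by rw [← Matrix.det_mul, hAA]
    have hAne : A.det ≠ 0 := hAdet.ne_zero
    rw [hBdef, Matrix.det_mul, Matrix.det_mul, Matrix.det_nonsing_inv,
      Ring.inverse_eq_inv']
    rw [← hA2]
    field_simp
  -- real versions
  have htr1 : (M⁻¹ * N).trace.re = ∑ i, μ i := by
    rw [h1, trace_eq_sum_eig hB.1]
    norm_cast
  have htr2 : (N⁻¹ * M).trace.re = ∑ i, (μ i)⁻¹ := by
    rw [h2, inv_trace_eq_sum_inv_eig hB]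
    norm_cast
  have hdetB : B.det = ((∏ i, μ i : ℝ) : ℂ) := by
    rw [hB.1.det_eq_prod_eigenvalues]
    norm_cast
  have hMdetR : M.det = ((∏ i, hM.1.eigenvalues i : ℝ) : ℂ) := by
    rw [hM.1.det_eq_prod_eigenvalues]
    norm_cast
  have hNdetR : N.det = ((∏ i, hN.1.eigenvalues i : ℝ) : ℂ) := by
    rw [hN.1.det_eq_prod_eigenvalues]
    norm_cast
  have hMpos : 0 < ∏ i, hM.1.eigenvalues i := Finset.prod_pos fun i _ => hM.eigenvalues_pos i
  have hdet : N.det.re / M.det.re = ∏ i, μ i := by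
    have := hdetB
    rw [h3, hNdetR, hMdetR, ← Complex.ofReal_div] at this
    have heq : (∏ i, hN.1.eigenvalues i) / (∏ i, hM.1.eigenvalues i) = ∏ i, μ i :=
      Complex.ofReal_injective this
    rw [hNdetR, hMdetR, Complex.ofReal_re, Complex.ofReal_re, heq]
  rw [htr1, htr2, hdet]
  exact key n hn μ hμ
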